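/- arXiv:2604.00236 — 3 statements merged into one kernel-verified Lean document; each statement's English description precedes it below -/
import Mathlib

section
/- Expansion composed with coarsening is idempotent on adjacency structure: if H = U(C(G)) is the expansion of the coarsening of G under partition C, then coarsening H by the same partition C yields a coarse graph whose adjacency is A' + pattern of nonempty-cluster self-loops off the diagonal; in particular C(H) has the same coarse adjacency A' as C(G) on distinct clusters u ≠ v with n_u, n_v ≥ 1. -/
open Matrix

/-- Re-coarsening the expanded graph recovers the same inter-cluster coarse adjacency:
for distinct nonempty clusters `u ≠ v`, the coarse adjacency of `H` equals `A'`. -/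
theorem recoarsening_expanded
    {n K : ℕ} (A : Matrix (Fin n) (Fin n) ℝ)
    (hA01 : ∀ i j, A i j = 0 ∨ A i j = 1)
    (c : Fin n → Fin K)
    (C : Matrix (Fin n) (Fin K) ℝ)
    (hC : ∀ i u, C i u = if c i = u then 1 else 0)
    (A' : Matrix (Fin K) (Fin K) ℝ)
    (hA' : ∀ u v, A' u v = if u ≠ v ∧ 0 < (Cᵀ * A * C) u v then 1 else 0)
    (H : Matrix (Fin n) (Fin n) ℝ)
    (hH : H = C * (A' + 1) * Cᵀ - 1) :
    ∀ u v, u ≠ v → (∃ i, c i = u) → (∃ j, c j = v) →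
      (if 0 < (Cᵀ * H * C) u v then (1 : ℝ) else 0) = A' u v := by
  intro u v huv hu hv
  obtain ⟨i0, hi0⟩ := hu
  obtain ⟨j0, hj0⟩ := hv
  -- On pairs (i,j) with c i = u, c j = v, H i j = A' u v
  have hHij : ∀ i j, c i = u → c j = v → H i j = A' u v := by
    intro i j hi hj
    have hij : i ≠ j := by
      intro h; apply huv; rw [← hi, ← hj, h]
    subst hH
    simp only [Matrix.sub_apply, Matrix.mul_apply, Matrix.transpose_apply, Matrix.one_apply, hC,
      Matrix.add_apply, if_neg hij, sub_zero]
    have : ∀ k : Fin K,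
        (∑ l : Fin K, (if c i = l then (1:ℝ) else 0) *
          ((A' l k + if l = k then 1 else 0))) = A' (c i) k + if c i = k then 1 else 0 := by
      intro k
      rw [Finset.sum_eq_single (c i)]
      · simp
      · intro b _ hb; simp [Ne.symm hb]
      · simp
    calc (∑ k, (∑ l, (if c i = l then (1:ℝ) else 0) * (A' l k + if l = k then 1 else 0)) *
          (if c j = k then 1 else 0))
        = ∑ k, (A' (c i) k + if c i = k then 1 else 0) * (if c j = k then 1 else 0) := by
          refine Finset.sum_congr rfl fun k _ => by rw [this k]
      _ = A' (c i) (c j) + if c i = c j then 1 else 0 := by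
          rw [Finset.sum_eq_single (c j)]
          · simp
          · intro b _ hb; simp [Ne.symm hb]
          · simp
      _ = A' u v := by
          rw [hi, hj, if_neg huv, add_zero]
  -- Compute the sum
  have hsum : (Cᵀ * H * C) u v =
      ((Finset.univ.filter fun i => c i = u).card : ℝ) *
      ((Finset.univ.filter fun j => c j = v).card : ℝ) * A' u v := by
    simp only [Matrix.mul_apply, Matrix.transpose_apply, hC, Finset.sum_mul]
    have key : ∀ j i, ((if c i = u then (1:ℝ) else 0) * H i j) * (if c j = v then 1 else 0)
        = (if c i = u then (1:ℝ) else 0) * ((if c j = v then (1:ℝ) else 0) * A' u v) := by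
      intro j i
      by_cases hi : c i = u <;> by_cases hj : c j = v <;>
        simp [hi, hj, hHij _ _]
    calc (∑ j, ∑ i, ((if c i = u then (1:ℝ) else 0) * H i j) * (if c j = v then 1 else 0))
        = ∑ j, ∑ i, (if c i = u then (1:ℝ) else 0) * ((if c j = v then (1:ℝ) else 0) * A' u v) := by
          refine Finset.sum_congr rfl fun j _ => Finset.sum_congr rfl fun i _ => key j i
      _ = (∑ i : Fin n, if c i = u then (1:ℝ) else 0) *
          ((∑ j : Fin n, if c j = v then (1:ℝ) else 0) * A' u v) := by
          rw [Finset.sum_comm]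
          simp only [← Finset.mul_sum, ← Finset.sum_mul]
      _ = _ := by
          simp only [Finset.sum_boole]
          ring
  -- Conclude
  have hA01' : A' u v = 0 ∨ A' u v = 1 := by
    rw [hA' u v]; split <;> simp
  rcases hA01' with h0 | h1
  · rw [h0] at hsum ⊢
    rw [hsum, mul_zero]
    simp
  · rw [h1] at hsum ⊢
    rw [hsum, mul_one]
    have h1' : 0 < ((Finset.univ.filter fun i => c i = u).card : ℝ) *
        ((Finset.univ.filter fun j => c j = v).card : ℝ) := by
      apply mul_pos <;>
      · rw [Nat.cast_pos, Finset.card_pos]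
        exact ⟨_, Finset.mem_filter.mpr ⟨Finset.mem_univ _, by assumption⟩⟩
    rw [if_pos h1']
end

section
/- Let p_t(z) = α(t)·𝟙[z = z_1] + (1−α(t))·𝟙[z = z_0] on [k] with differentiable α, α(t) < 1. Define u_t(z, z_t) = (α'(t)/(1−α(t)))·(𝟙[z = z_1] − 𝟙[z = z_t]). Then the continuity (Kolmogorov forward) equation holds: d/dt p_t(z) = Σ_{y ∈ [k]} u_t(z, y) p_t(y) for all z ∈ [k]. -/
/-- The probability velocity `u_t(z,y) = (α'(t)/(1−α(t)))(𝟙[z=z₁] − 𝟙[z=y])`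
satisfies the continuity equation `d/dt p_t(z) = Σ_y u_t(z,y) p_t(y)` for the
interpolant path. -/
theorem interpolant_velocity_continuity_equation
    {k : ℕ} (z0 z1 : Fin k)
    (α : ℝ → ℝ) (α' : ℝ)
    (t : ℝ) (hderiv : HasDerivAt α α' t) (hα1 : α t < 1)
    (p : ℝ → Fin k → ℝ)
    (hp : ∀ s z, p s z =
      α s * (if z = z1 then 1 else 0) + (1 - α s) * (if z = z0 then 1 else 0))
    (u : Fin k → Fin k → ℝ)
    (hu : ∀ z y, u z y =
      (α' / (1 - α t)) * ((if z = z1 then 1 else 0) - (if z = y then 1 else 0))) :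
    ∀ z, HasDerivAt (fun s => p s z) (∑ y, u z y * p t y) t := by
  intro z
  set a : ℝ := if z = z1 then 1 else 0 with ha
  set b : ℝ := if z = z0 then 1 else 0 with hb
  have hne : (1 - α t) ≠ 0 := by linarith
  have hsum1 : (∑ y, p t y) = 1 := by
    simp [hp, Finset.sum_add_distrib, ← Finset.mul_sum, Finset.sum_ite_eq']
  have hsum2 : (∑ y, (if z = y then (1:ℝ) else 0) * p t y) = p t z := by
    simp [Finset.sum_ite_eq]
  have hkey : (∑ y, u z y * p t y) = α' * (a - b) := by
    have : (∑ y, u z y * p t y)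
        = (α' / (1 - α t)) * (a * (∑ y, p t y) - ∑ y, (if z = y then (1:ℝ) else 0) * p t y) := by
      rw [Finset.mul_sum, ← Finset.sum_sub_distrib, Finset.mul_sum]
      exact Finset.sum_congr rfl fun y _ => by rw [hu]; ring
    rw [this, hsum1, hsum2, hp, ← ha, ← hb]
    have h2 : a * 1 - (α t * a + (1 - α t) * b) = (1 - α t) * (a - b) := by ring
    rw [h2, div_mul_eq_mul_div, mul_comm (1 - α t), ← mul_assoc,
      mul_div_assoc, div_self hne, mul_one]
  rw [hkey]
  have h : HasDerivAt (fun s => p s z) (α' * a + (0 - α') * b) t := by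
    have := (hderiv.mul_const a).add (((hasDerivAt_const t (1:ℝ)).sub hderiv).mul_const b)
    refine HasDerivAt.congr_of_eventuallyEq this ?_
    filter_upwards with s
    rw [hp]; rfl
  convert h using 1
  ring
end

section
/- One-step exactness of discrete flow matching: with the interpolant path p_t(z) = α(t)𝟙[z=z_1] + (1−α(t))𝟙[z=z_0] and velocity u_t(z,z_t) = (α'(t)/(1−α(t)))(𝟙[z=z_1] − 𝟙[z=z_t]), if α is affine on [t, t+Δ] (so α(t+Δ) = α(t) + α'(t)Δ) and Z_t ~ p_t, then the random variable Z_{t+Δ} sampled from 𝟙[z=Z_t] + Δ·u_t(z, Z_t) satisfies Z_{t+Δ} ~ p_{t+Δ}. -/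
/-- One-step exactness of discrete flow matching: if `α` is affine on `[t, t+Δ]`
and `Z_t ~ p_t`, then the update kernel transports `p_t` exactly to `p_{t+Δ}`. -/
theorem dfm_one_step_exactness
    {k : ℕ} (z0 z1 : Fin k)
    (α : ℝ → ℝ) (a t Δ : ℝ)
    (haff : α (t + Δ) = α t + a * Δ)
    (hαlt : α t < 1)
    (hlam0 : 0 ≤ a * Δ / (1 - α t)) (hlam1 : a * Δ / (1 - α t) ≤ 1)
    (p : ℝ → Fin k → ℝ)
    (hp : ∀ s z, p s z =
      α s * (if z = z1 then 1 else 0) + (1 - α s) * (if z = z0 then 1 else 0)) :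
    ∀ z, (∑ y, p t y * ((if z = y then 1 else 0) +
        Δ * ((a / (1 - α t)) * ((if z = z1 then 1 else 0) - (if z = y then 1 else 0)))))
      = p (t + Δ) z := by
  intro z
  have hne : (1:ℝ) - α t ≠ 0 := by linarith
  have key : ∀ f : Fin k → ℝ, ∑ y, f y * (if z = y then 1 else 0) = f z := by
    intro f
    simp [mul_ite]
  have hS : ∑ y, p t y = 1 := by
    simp only [hp]
    rw [Finset.sum_add_distrib]
    simp [mul_ite, Finset.sum_ite_eq]
  have expand : ∀ y : Fin k, p t y * ((if z = y then 1 else 0) +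
      Δ * ((a / (1 - α t)) * ((if z = z1 then 1 else 0) - (if z = y then 1 else 0))))
      = p t y * (if z = y then 1 else 0)
        + (Δ * (a / (1 - α t)) * (if z = z1 then 1 else 0)) * p t y
        - Δ * (a / (1 - α t)) * (p t y * (if z = y then 1 else 0)) := by
    intro y; ring
  rw [Finset.sum_congr rfl (fun y _ => expand y), Finset.sum_sub_distrib,
    Finset.sum_add_distrib, ← Finset.mul_sum, ← Finset.mul_sum, key, hS]
  simp only [hp, haff]
  by_cases hz1 : z = z1 <;> by_cases hz0 : z = z0 <;>
    subst_vars <;> simp_all <;> field_simp <;> ring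
end
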